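/- arXiv:2506.17094 — 2 statements merged into one kernel-verified Lean document; each statement's English description precedes it below -/
import Mathlib

section
/- Let φ: ℝ → ℝ be continuous and nonincreasing, and φ_n(u) := n((I − φ/n)^{-1}(u) − u) its Yosida approximation. Then for every R > 0, sup_{|u| ≤ R} |φ_n(u) − φ(u)| → 0 as n → ∞. -/
/-- For `φ : ℝ → ℝ` continuous and nonincreasing, with `ψ n` the inverse of `I − φ/n`
and Yosida approximation `φ_n(u) := n (ψ n u − u)`, one has, for every `R > 0`,
`sup_{|u| ≤ R} |φ_n u − φ u| → 0` as `n → ∞`. -/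
theorem stmt_5 (φ : ℝ → ℝ) (hφc : Continuous φ) (hφm : Antitone φ)
    (ψ : ℕ → ℝ → ℝ)
    (hψl : ∀ n : ℕ, 1 ≤ n → Function.LeftInverse (ψ n) (fun u : ℝ => u - φ u / n))
    (hψr : ∀ n : ℕ, 1 ≤ n → Function.RightInverse (ψ n) (fun u : ℝ => u - φ u / n))
    (R : ℝ) (hR : 0 < R) :
    ∀ ε > 0, ∃ N : ℕ, ∀ n : ℕ, N ≤ n → ∀ u : ℝ, |u| ≤ R →
      |(n : ℝ) * (ψ n u - u) - φ u| ≤ ε := by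
  intro ε hε
  set M : ℝ := max |φ R| |φ (-R)| with hMdef
  have hM0 : 0 ≤ M := le_trans (abs_nonneg _) (le_max_left _ _)
  -- key facts: the defining equation and the a priori bound |φ (ψ n u)| ≤ M
  have key : ∀ n : ℕ, 1 ≤ n → ∀ u : ℝ, |u| ≤ R →
      ψ n u - u = φ (ψ n u) / n ∧ |φ (ψ n u)| ≤ M := by
    intro n hn u hu
    have hn0 : (0:ℝ) < n := by exact_mod_cast hn
    have heq : ψ n u - φ (ψ n u) / n = u := hψr n hn u
    have heq2 : ψ n u - u = φ (ψ n u) / n := by linarith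
    refine ⟨heq2, ?_⟩
    have huR : u ≤ R := le_of_abs_le hu
    have huR' : -R ≤ u := neg_le_of_abs_le hu
    rcases le_or_gt 0 (φ (ψ n u)) with h | h
    · have hd : 0 ≤ φ (ψ n u) / n := div_nonneg h hn0.le
      have hv : u ≤ ψ n u := by linarith
      have h1 : φ (ψ n u) ≤ φ u := hφm hv
      have h2 : φ u ≤ φ (-R) := hφm huR'
      have h3 : φ (-R) ≤ M := le_trans (le_abs_self _) (le_max_right _ _)
      rw [abs_of_nonneg h]; linarith
    · have hd : φ (ψ n u) / n ≤ 0 := div_nonpos_of_nonpos_of_nonneg h.le hn0.le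
      have hv : ψ n u ≤ u := by linarith
      have h1 : φ u ≤ φ (ψ n u) := hφm hv
      have h2 : φ R ≤ φ u := hφm huR
      have h3 : -M ≤ φ R := by
        have : φ R ≥ -|φ R| := neg_abs_le _
        have : |φ R| ≤ M := le_max_left _ _
        linarith [neg_abs_le (φ R)]
      rw [abs_of_neg h]; linarith
  -- uniform continuity on a compact interval
  have hK : IsCompact (Set.Icc (-(R + M)) (R + M)) := isCompact_Icc
  have hUC : UniformContinuousOn φ (Set.Icc (-(R + M)) (R + M)) :=
    hK.uniformContinuousOn_of_continuous hφc.continuousOn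
  rw [Metric.uniformContinuousOn_iff] at hUC
  obtain ⟨δ, hδ, hδ'⟩ := hUC ε hε
  obtain ⟨N0, hN0⟩ := exists_nat_gt (M / δ)
  refine ⟨max N0 1, ?_⟩
  intro n hn u hu
  have hn1 : 1 ≤ n := le_trans (le_max_right _ _) hn
  have hnN0 : N0 ≤ n := le_trans (le_max_left _ _) hn
  have hn0 : (0:ℝ) < n := by exact_mod_cast hn1
  obtain ⟨heq2, hbd⟩ := key n hn1 u hu
  have hMn : M / n < δ := by
    have hN0n : (N0 : ℝ) ≤ n := by exact_mod_cast hnN0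
    have h1 : M / δ < n := lt_of_lt_of_le hN0 hN0n
    rw [div_lt_iff₀ hn0]
    have := (div_lt_iff₀ hδ).mp h1
    linarith [mul_comm δ (n:ℝ)]
  have hdist : |ψ n u - u| < δ := by
    rw [heq2, abs_div, abs_of_pos hn0]
    exact lt_of_le_of_lt (div_le_div_of_nonneg_right hbd hn0.le) hMn
  -- memberships
  have hmemu : u ∈ Set.Icc (-(R + M)) (R + M) := by
    constructor <;> [linarith [neg_le_of_abs_le hu]; linarith [le_of_abs_le hu]]
  have hmemv : ψ n u ∈ Set.Icc (-(R + M)) (R + M) := by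
    have h1 : |ψ n u - u| ≤ M := by
      rw [heq2, abs_div, abs_of_pos hn0]
      calc |φ (ψ n u)| / n ≤ M / n := by
            apply div_le_div_of_nonneg_right hbd hn0.le
        _ ≤ M / 1 := by
            apply div_le_div_of_nonneg_left hM0 one_pos
            exact_mod_cast hn1
        _ = M := div_one M
    have h2 := abs_sub_abs_le_abs_sub (ψ n u) u
    have h3 : |ψ n u| ≤ R + M := by
      have := le_of_abs_le hu
      linarith [abs_sub_abs_le_abs_sub (ψ n u) u]
    exact ⟨neg_le_of_abs_le h3, le_of_abs_le h3⟩
  have := hδ' (ψ n u) hmemv u hmemu (by rwa [Real.dist_eq])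
  rw [Real.dist_eq] at this
  have hfin : (n:ℝ) * (ψ n u - u) = φ (ψ n u) := by
    rw [heq2]; field_simp
  rw [hfin]
  exact le_of_lt this
end

section
/- With K, Y, e_i as above and additionally |(S(s)(Y e_i))(ξ)| ≤ ‖e_i‖_∞ (S(s)|Y|)(ξ) ≤ ‖e_i‖_∞ ‖Y‖_∞, one has for every ζ ≥ 1 the estimate Σ_{i=1}^∞ |(S(s)(Y e_i))(ξ)|^{2ζ} ‖e_i‖_∞^{−2(ζ−1)} ≤ k₁ s^{−d/2} ‖Y‖_∞^{2ζ}. -/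
open MeasureTheory Set

lemma term_bd_stmt12 (a m R ζ : ℝ) (hm : 0 < m) (hR : 0 ≤ R) (ha : |a| ≤ m * R)
    (hζ : 1 ≤ ζ) :
    |a| ^ (2 * ζ) * m ^ (-(2 * (ζ - 1))) ≤ R ^ (2 * (ζ - 1)) * a ^ 2 := by
  have habs : (0:ℝ) ≤ |a| := abs_nonneg a
  have hp : (0:ℝ) ≤ 2 * (ζ - 1) := by linarith
  have hsplit : |a| ^ (2 * ζ) = |a| ^ (2 * (ζ - 1)) * |a| ^ (2:ℝ) := by
    rw [← Real.rpow_add' habs (by intro h; nlinarith)]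
    ring_nf
  have key : |a| ^ (2 * (ζ - 1)) * m ^ (-(2 * (ζ - 1))) ≤ R ^ (2 * (ζ - 1)) := by
    rw [Real.rpow_neg hm.le, ← div_eq_mul_inv, ← Real.div_rpow habs hm.le]
    exact Real.rpow_le_rpow (by positivity) (div_le_of_le_mul₀ hm.le hR (by linarith [ha])) hp
  calc |a| ^ (2 * ζ) * m ^ (-(2 * (ζ - 1)))
      = (|a| ^ (2 * (ζ - 1)) * m ^ (-(2 * (ζ - 1)))) * |a| ^ (2:ℝ) := by
        rw [hsplit]; ring
    _ ≤ R ^ (2 * (ζ - 1)) * |a| ^ (2:ℝ) := by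
        apply mul_le_mul_of_nonneg_right key (by positivity)
    _ = R ^ (2 * (ζ - 1)) * a ^ 2 := by
        rw [Real.rpow_two, sq_abs]

/-- Weighted interpolation bound: with `μ_i = ‖e_i‖_∞`, the pointwise bound
`|(S(s)(Y e_i))(ξ)| ≤ μ_i ‖Y‖_∞` and the Parseval bound
`∑_i |(S(s)(Y e_i))(ξ)|² ≤ k₁ s^{−d/2} ‖Y‖_∞²` give, for every `ζ ≥ 1`,
`∑_i |(S(s)(Y e_i))(ξ)|^{2ζ} μ_i^{−2(ζ−1)} ≤ k₁ s^{−d/2} ‖Y‖_∞^{2ζ}`. -/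
theorem stmt_12 {d : ℕ} (O : Set (Fin d → ℝ))
    (e : ℕ → (Fin d → ℝ) → ℝ) (μ : ℕ → ℝ) (hμ : ∀ i, 0 < μ i)
    (heμ : ∀ i, ∀ y, |e i y| ≤ μ i)
    (s : ℝ) (hs : 0 < s) (ξ : Fin d → ℝ)
    (K : ℝ → (Fin d → ℝ) → (Fin d → ℝ) → ℝ)
    (k₁ : ℝ) (hk₁ : 0 < k₁)
    (Y : (Fin d → ℝ) → ℝ)
    (R : ℝ) (hR : 0 ≤ R) (hYbd : ∀ y, |Y y| ≤ R)
    (hSbd : ∀ i, |∫ y in O, K s ξ y * Y y * e i y| ≤ μ i * R)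
    (hsummable : Summable (fun i => (∫ y in O, K s ξ y * Y y * e i y) ^ 2))
    (hParsevalBd : ∑' i, (∫ y in O, K s ξ y * Y y * e i y) ^ 2
        ≤ k₁ * s ^ (-(d : ℝ) / 2) * R ^ 2)
    (ζ : ℝ) (hζ : 1 ≤ ζ) :
    ∑' i, |∫ y in O, K s ξ y * Y y * e i y| ^ (2 * ζ) * (μ i) ^ (-(2 * (ζ - 1)))
      ≤ k₁ * s ^ (-(d : ℝ) / 2) * R ^ (2 * ζ) := by
  set a : ℕ → ℝ := fun i => ∫ y in O, K s ξ y * Y y * e i y with ha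
  have hterm : ∀ i, |a i| ^ (2 * ζ) * (μ i) ^ (-(2 * (ζ - 1)))
      ≤ R ^ (2 * (ζ - 1)) * (a i) ^ 2 :=
    fun i => term_bd_stmt12 (a i) (μ i) R ζ (hμ i) hR (hSbd i) hζ
  have hsum2 : Summable (fun i => R ^ (2 * (ζ - 1)) * (a i) ^ 2) :=
    hsummable.mul_left _
  have h1 : ∑' i, |a i| ^ (2 * ζ) * (μ i) ^ (-(2 * (ζ - 1)))
      ≤ ∑' i, R ^ (2 * (ζ - 1)) * (a i) ^ 2 := by
    by_cases hsum1 : Summable (fun i => |a i| ^ (2 * ζ) * (μ i) ^ (-(2 * (ζ - 1))))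
    · exact Summable.tsum_le_tsum hterm hsum1 hsum2
    · rw [tsum_eq_zero_of_not_summable hsum1]
      exact tsum_nonneg fun i => by positivity
  have h2 : ∑' i, R ^ (2 * (ζ - 1)) * (a i) ^ 2
      = R ^ (2 * (ζ - 1)) * ∑' i, (a i) ^ 2 := tsum_mul_left
  have h3 : R ^ (2 * (ζ - 1)) * ∑' i, (a i) ^ 2
      ≤ R ^ (2 * (ζ - 1)) * (k₁ * s ^ (-(d : ℝ) / 2) * R ^ 2) :=
    mul_le_mul_of_nonneg_left hParsevalBd (by positivity)
  have h4 : R ^ (2 * (ζ - 1)) * (k₁ * s ^ (-(d : ℝ) / 2) * R ^ 2)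
      = k₁ * s ^ (-(d : ℝ) / 2) * R ^ (2 * ζ) := by
    have : R ^ (2 * ζ) = R ^ (2 * (ζ - 1)) * R ^ (2:ℝ) := by
      rw [← Real.rpow_add' hR (by intro h; nlinarith)]
      ring_nf
    rw [this, Real.rpow_two]; ring
  linarith [h1, h2 ▸ le_trans (le_of_eq h2) (h4 ▸ h3)]
end
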